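/- Fix an integer q ≥ 2 and a real b ≠ 0, and let g₂(t) = b - t/q. Let S be the smallest set of functions ℝ → ℝ containing g₂ and closed under pointwise addition and composition. Then the constant functions b and -b, the zero function, the identity t ↦ t, the function t ↦ -t, and the function t ↦ t/q all belong to S. -/

import Mathlib

theorem stmt17 (q : ℤ) (hq : 2 ≤ q) (b : ℝ) (hb : b ≠ 0)
    (S : Set (ℝ → ℝ))
    (hg₂ : (fun t : ℝ => b - t / (q : ℝ)) ∈ S)
    (hadd : ∀ f ∈ S, ∀ h ∈ S, (f + h) ∈ S)
    (hcomp : ∀ f ∈ S, ∀ h ∈ S, (f ∘ h) ∈ S)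
    (hmin : ∀ T : Set (ℝ → ℝ), (fun t : ℝ => b - t / (q : ℝ)) ∈ T →
      (∀ f ∈ T, ∀ h ∈ T, (f + h) ∈ T) →
      (∀ f ∈ T, ∀ h ∈ T, (f ∘ h) ∈ T) → S ⊆ T) :
    (fun _ : ℝ => b) ∈ S ∧ (fun _ : ℝ => -b) ∈ S ∧
      (fun _ : ℝ => (0 : ℝ)) ∈ S ∧ (fun t : ℝ => t) ∈ S ∧
      (fun t : ℝ => -t) ∈ S ∧ (fun t : ℝ => t / (q : ℝ)) ∈ S := by
  have hq0 : (q : ℝ) ≠ 0 := by positivity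
  -- sums of n+1 copies
  have key : ∀ f ∈ S, ∀ m : ℕ, (fun t => ((m : ℝ) + 1) * f t) ∈ S := by
    intro f hf m
    induction m with
    | zero => simpa using hf
    | succ k ih =>
        have h := hadd _ ih _ hf
        have he : (fun t => (((k + 1 : ℕ) : ℝ) + 1) * f t)
            = (fun t => ((k : ℝ) + 1) * f t) + f := by
          funext t; simp [Pi.add_apply]; push_cast; ring
        rw [he]; exact h
  have key' : ∀ f ∈ S, ∀ m : ℕ, 1 ≤ m → (fun t => (m : ℝ) * f t) ∈ S := by
    intro f hf m hm
    have h := key f hf (m - 1)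
    have : ((m - 1 : ℕ) : ℝ) + 1 = (m : ℝ) := by
      have : (m - 1) + 1 = m := Nat.succ_pred_eq_of_pos hm
      rw [← this]; push_cast; ring
    rwa [this] at h
  set n : ℕ := q.toNat with hn
  have hnq : (n : ℝ) = (q : ℝ) := by
    have h' : ((n : ℤ) : ℝ) = (q : ℝ) := by
      rw [hn, Int.toNat_of_nonneg (by linarith)]
    exact_mod_cast h'
  have hn2 : 2 ≤ n := by omega
  -- g₂ ∘ g₂
  have hgg : (fun t : ℝ => b - (b - t / q) / q) ∈ S := by
    have := hcomp _ hg₂ _ hg₂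
    simpa [Function.comp_def] using this
  -- constant q*b :  g₂ + q • (g₂∘g₂)
  have hCq : (fun _ : ℝ => (q : ℝ) * b) ∈ S := by
    have hm := key' _ hgg n (by omega)
    have h := hadd _ hg₂ _ hm
    have he : (fun _ : ℝ => (q : ℝ) * b)
        = (fun t : ℝ => b - t / q) + (fun t => (n : ℝ) * (b - (b - t / q) / q)) := by
      funext t; simp [Pi.add_apply, hnq]; field_simp; ring
    rw [he]; exact h
  -- zero : g₂ ∘ const qb
  have h0 : (fun _ : ℝ => (0 : ℝ)) ∈ S := by
    have h := hcomp _ hg₂ _ hCq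
    have he : (fun _ : ℝ => (0 : ℝ))
        = (fun t : ℝ => b - t / q) ∘ (fun _ : ℝ => (q : ℝ) * b) := by
      funext t; simp [Function.comp]; field_simp; ring
    rw [he]; exact h
  -- const b : g₂ ∘ 0
  have hB : (fun _ : ℝ => b) ∈ S := by
    have h := hcomp _ hg₂ _ h0
    have he : (fun _ : ℝ => b) = (fun t : ℝ => b - t / q) ∘ (fun _ : ℝ => (0 : ℝ)) := by
      funext t; simp [Function.comp]
    rw [he]; exact h
  -- const -b : g₂ ∘ (const qb + const qb)
  have hmB : (fun _ : ℝ => -b) ∈ S := by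
    have h2 := hadd _ hCq _ hCq
    have h := hcomp _ hg₂ _ h2
    have he : (fun _ : ℝ => -b)
        = (fun t : ℝ => b - t / q) ∘ ((fun _ : ℝ => (q : ℝ) * b) + fun _ : ℝ => (q : ℝ) * b) := by
      funext t; simp [Function.comp, Pi.add_apply]; field_simp; ring
    rw [he]; exact h
  -- identity : q² • (g₂∘g₂) + (q²-q) • (const -b)
  have hid : (fun t : ℝ => t) ∈ S := by
    have hle : n ≤ n ^ 2 := Nat.le_self_pow (by norm_num) n
    have h1 := key' _ hgg (n ^ 2) (by nlinarith)
    have h2 := key' _ hmB (n ^ 2 - n)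
      (by nlinarith [Nat.sub_add_cancel hle])
    have h := hadd _ h1 _ h2
    have hc : ((n ^ 2 - n : ℕ) : ℝ) = (q : ℝ) ^ 2 - q := by
      push_cast [Nat.cast_sub hle]; rw [hnq]
    have he : (fun t : ℝ => t)
        = (fun t => ((n ^ 2 : ℕ) : ℝ) * (b - (b - t / q) / q))
          + (fun _ => ((n ^ 2 - n : ℕ) : ℝ) * (-b)) := by
      funext t; simp only [Pi.add_apply, hc]
      push_cast [hnq]
      field_simp; ring
    rw [he]; exact h
  -- t/q : q • (g₂∘g₂) + (q-1) • (const -b)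
  have hdiv : (fun t : ℝ => t / (q : ℝ)) ∈ S := by
    have h1 := key' _ hgg n (by omega)
    have h2 := key' _ hmB (n - 1) (by omega)
    have h := hadd _ h1 _ h2
    have hc : ((n - 1 : ℕ) : ℝ) = (q : ℝ) - 1 := by
      push_cast [Nat.cast_sub (by omega : 1 ≤ n)]; rw [hnq]
    have he : (fun t : ℝ => t / (q : ℝ))
        = (fun t => (n : ℝ) * (b - (b - t / q) / q))
          + (fun _ => ((n - 1 : ℕ) : ℝ) * (-b)) := by
      funext t; simp only [Pi.add_apply, hc, hnq]
      field_simp; ring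
    rw [he]; exact h
  -- -t : q • g₂ + q • (const -b)
  have hneg : (fun t : ℝ => -t) ∈ S := by
    have h1 := key' _ hg₂ n (by omega)
    have h2 := key' _ hmB n (by omega)
    have h := hadd _ h1 _ h2
    have he : (fun t : ℝ => -t)
        = (fun t => (n : ℝ) * (b - t / q)) + (fun _ => (n : ℝ) * (-b)) := by
      funext t; simp only [Pi.add_apply, hnq]; field_simp; ring
    rw [he]; exact h
  exact ⟨hB, hmB, h0, hid, hneg, hdiv⟩
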